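/- Let L be the normalized Laplacian of a finite, connected, weighted, undirected graph G with second-smallest eigenvalue λ₂ and sparsest cut (conductance) φ. Then λ₂/2 ≤ φ ≤ √(2λ₂). -/

import Mathlib

set_option maxHeartbeats 1600000

open Matrix

/-- Weighted degree of a vertex. -/
noncomputable def wdeg {V : Type*} [Fintype V] (A : Matrix V V ℝ) (u : V) : ℝ :=
  ∑ v, A u v

/-- Total weight of edges crossing the cut `(S, Sᶜ)`. -/
noncomputable def cutW {V : Type*} [Fintype V] [DecidableEq V]
    (A : Matrix V V ℝ) (S : Finset V) : ℝ :=
  ∑ u ∈ S, ∑ v ∈ Sᶜ, A u v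

/-- Volume of a vertex set: the sum of the weighted degrees. -/
noncomputable def volW {V : Type*} [Fintype V] (A : Matrix V V ℝ) (S : Finset V) : ℝ :=
  ∑ u ∈ S, wdeg A u

/-- The conductance (sparsest cut value) of a weighted graph. -/
noncomputable def conductance {V : Type*} [Fintype V] [DecidableEq V]
    (A : Matrix V V ℝ) : ℝ :=
  sInf {r | ∃ S : Finset V, S.Nonempty ∧ S ≠ Finset.univ ∧
    r = cutW A S / min (volW A S) (volW A Sᶜ)}

/-- The normalized Laplacian `I - D^{-1/2} A D^{-1/2}`. -/
noncomputable def normLap {V : Type*} [Fintype V] [DecidableEq V]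
    (A : Matrix V V ℝ) : Matrix V V ℝ :=
  1 - Matrix.diagonal (fun u => 1 / Real.sqrt (wdeg A u)) * A *
    Matrix.diagonal (fun u => 1 / Real.sqrt (wdeg A u))

namespace CheegerAux

variable {n : ℕ} {A : Matrix (Fin n) (Fin n) ℝ}

section Basic

lemma cutW_nonneg (hnn : ∀ u v, 0 ≤ A u v) (S : Finset (Fin n)) : 0 ≤ cutW A S :=
  Finset.sum_nonneg fun u _ => Finset.sum_nonneg fun v _ => hnn u v

lemma volW_nonneg (hdeg : ∀ u, 0 < wdeg A u) (S : Finset (Fin n)) : 0 ≤ volW A S :=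
  Finset.sum_nonneg fun u _ => (hdeg u).le

lemma volW_pos (hdeg : ∀ u, 0 < wdeg A u) {S : Finset (Fin n)} (hS : S.Nonempty) :
    0 < volW A S :=
  Finset.sum_pos (fun u _ => hdeg u) hS

lemma volW_mono (hdeg : ∀ u, 0 < wdeg A u) {S T : Finset (Fin n)} (h : S ⊆ T) :
    volW A S ≤ volW A T :=
  Finset.sum_le_sum_of_subset_of_nonneg h (fun u _ _ => (hdeg u).le)

lemma volW_add_compl (S : Finset (Fin n)) :
    volW A S + volW A Sᶜ = volW A Finset.univ := by
  rw [volW, volW, volW, ← Finset.sum_add_sum_compl S]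

lemma normLap_mulVec_apply (x : Fin n → ℝ) (u : Fin n) :
    (normLap A *ᵥ x) u
      = x u - (1 / Real.sqrt (wdeg A u)) * ∑ w, A u w * ((1 / Real.sqrt (wdeg A w)) * x w) := by
  have h : (Matrix.diagonal (fun u => 1 / Real.sqrt (wdeg A u)) * A *
      Matrix.diagonal (fun u => 1 / Real.sqrt (wdeg A u))) *ᵥ x
      = Matrix.diagonal (fun u => 1 / Real.sqrt (wdeg A u)) *ᵥ
        (A *ᵥ (Matrix.diagonal (fun u => 1 / Real.sqrt (wdeg A u)) *ᵥ x)) := by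
    rw [Matrix.mulVec_mulVec, Matrix.mulVec_mulVec]
  rw [normLap, Matrix.sub_mulVec, Matrix.one_mulVec, Pi.sub_apply, h, Matrix.mulVec_diagonal]
  simp [Matrix.mulVec, dotProduct, Matrix.mulVec_diagonal, Matrix.diagonal_apply, ite_mul,
    zero_mul, Finset.sum_ite_eq]

/-- quadratic form of the normalized Laplacian -/
lemma quadForm (hsym : A.IsSymm) (hdeg : ∀ u, 0 < wdeg A u) (f : Fin n → ℝ) :
    (fun u => f u * Real.sqrt (wdeg A u)) ⬝ᵥ
      (normLap A *ᵥ fun u => f u * Real.sqrt (wdeg A u))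
      = (∑ u, ∑ w, A u w * (f u - f w) ^ 2) / 2 := by
  have hs : ∀ u, Real.sqrt (wdeg A u) ≠ 0 := fun u => Real.sqrt_ne_zero'.mpr (hdeg u)
  have hdd : ∀ u, Real.sqrt (wdeg A u) * Real.sqrt (wdeg A u) = wdeg A u :=
    fun u => Real.mul_self_sqrt (hdeg u).le
  have col : ∀ w, ∑ u, A u w = wdeg A w := by
    intro w
    rw [wdeg]
    exact Finset.sum_congr rfl fun u _ => hsym.apply w u
  have hL : (fun u => f u * Real.sqrt (wdeg A u)) ⬝ᵥ
      (normLap A *ᵥ fun u => f u * Real.sqrt (wdeg A u))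
      = (∑ u, wdeg A u * f u ^ 2) - ∑ u, ∑ w, f u * (A u w * f w) := by
    rw [dotProduct, ← Finset.sum_sub_distrib]
    refine Finset.sum_congr rfl fun u _ => ?_
    rw [normLap_mulVec_apply]
    have h1 : ∀ w, A u w * ((1 / Real.sqrt (wdeg A w)) * (f w * Real.sqrt (wdeg A w)))
        = A u w * f w := by
      intro w
      rw [show A u w * ((1 / Real.sqrt (wdeg A w)) * (f w * Real.sqrt (wdeg A w)))
        = A u w * f w * (Real.sqrt (wdeg A w) * (1 / Real.sqrt (wdeg A w))) from by ring,
        mul_one_div_cancel (hs w), mul_one]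
    rw [show (∑ w, A u w * ((1 / Real.sqrt (wdeg A w)) * (f w * Real.sqrt (wdeg A w))))
        = ∑ w, A u w * f w from Finset.sum_congr rfl fun w _ => h1 w]
    have : f u * Real.sqrt (wdeg A u) * ((1 / Real.sqrt (wdeg A u)) * ∑ w, A u w * f w)
        = f u * ∑ w, A u w * f w := by
      rw [show f u * Real.sqrt (wdeg A u) * ((1 / Real.sqrt (wdeg A u)) * ∑ w, A u w * f w)
        = f u * (∑ w, A u w * f w) * (Real.sqrt (wdeg A u) * (1 / Real.sqrt (wdeg A u)))
        from by ring, mul_one_div_cancel (hs u), mul_one]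
    rw [mul_sub, this, Finset.mul_sum]
    have : f u * Real.sqrt (wdeg A u) * (f u * Real.sqrt (wdeg A u)) = wdeg A u * f u ^ 2 := by
      rw [show f u * Real.sqrt (wdeg A u) * (f u * Real.sqrt (wdeg A u))
        = (Real.sqrt (wdeg A u) * Real.sqrt (wdeg A u)) * f u ^2 by ring, hdd]
    rw [this]
  rw [hL]
  have hR : ∑ u, ∑ w, A u w * (f u - f w) ^ 2
      = (∑ u, wdeg A u * f u ^ 2) + (∑ w, wdeg A w * f w ^ 2)
        - 2 * ∑ u, ∑ w, f u * (A u w * f w) := by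
    have e1 : ∀ u, ∑ w, A u w * (f u - f w) ^ 2
        = f u ^ 2 * wdeg A u + (∑ w, f w ^ 2 * A u w) - 2 * ∑ w, f u * (A u w * f w) := by
      intro u
      rw [show f u ^ 2 * wdeg A u = ∑ w, f u ^ 2 * A u w by rw [wdeg, Finset.mul_sum]]
      rw [← Finset.sum_add_distrib, Finset.mul_sum, ← Finset.sum_sub_distrib]
      exact Finset.sum_congr rfl fun w _ => by ring
    rw [show (∑ u, ∑ w, A u w * (f u - f w) ^ 2)
        = ∑ u, (f u ^ 2 * wdeg A u + (∑ w, f w ^ 2 * A u w) - 2 * ∑ w, f u * (A u w * f w))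
        from Finset.sum_congr rfl fun u _ => e1 u]
    rw [Finset.sum_sub_distrib, Finset.sum_add_distrib, Finset.mul_sum]
    congr 1
    congr 1
    · exact Finset.sum_congr rfl fun u _ => by ring
    · rw [Finset.sum_comm]
      exact Finset.sum_congr rfl fun w _ => by
        rw [show (∑ x, f w ^ 2 * A x w) = f w ^ 2 * ∑ x, A x w from (Finset.mul_sum _ _ _).symm,
          col w]; ring
  rw [hR]; ring

end Basic

section Spectral

variable {μ : Fin n → ℝ} {v : Fin n → Fin n → ℝ}

lemma dot_sum_smul (z : Fin n → ℝ) (c : Fin n → ℝ) (w : Fin n → Fin n → ℝ) :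
    z ⬝ᵥ (∑ i, c i • w i) = ∑ i, c i * (z ⬝ᵥ w i) := by
  simp only [dotProduct, Finset.sum_apply, Pi.smul_apply, smul_eq_mul, Finset.mul_sum]
  rw [Finset.sum_comm]
  exact Finset.sum_congr rfl fun i _ => Finset.sum_congr rfl fun j _ => by ring

lemma basis_expand (horth : ∀ i j, v i ⬝ᵥ v j = if i = j then (1 : ℝ) else 0)
    (y : Fin n → ℝ) : y = ∑ i, (v i ⬝ᵥ y) • v i := by
  have hB : (Matrix.of v) * (Matrix.of v)ᵀ = 1 := by
    ext i j
    rw [Matrix.mul_apply, Matrix.one_apply]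
    simpa [dotProduct] using horth i j
  have hBtB : (Matrix.of v)ᵀ * (Matrix.of v) = 1 := mul_eq_one_comm.mp hB
  have h1 : ((Matrix.of v)ᵀ * (Matrix.of v)) *ᵥ y = y := by rw [hBtB, Matrix.one_mulVec]
  have h2 : ((Matrix.of v)ᵀ * (Matrix.of v)) *ᵥ y = ∑ i, (v i ⬝ᵥ y) • v i := by
    funext j
    rw [← Matrix.mulVec_mulVec]
    simp only [Matrix.mulVec, dotProduct, Matrix.transpose_apply, Matrix.of_apply,
      Finset.sum_apply, Pi.smul_apply, smul_eq_mul]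
    exact Finset.sum_congr rfl fun i _ => by ring
  calc y = ((Matrix.of v)ᵀ * (Matrix.of v)) *ᵥ y := h1.symm
  _ = ∑ i, (v i ⬝ᵥ y) • v i := h2

lemma parseval (horth : ∀ i j, v i ⬝ᵥ v j = if i = j then (1 : ℝ) else 0)
    (y : Fin n → ℝ) : y ⬝ᵥ y = ∑ i, (v i ⬝ᵥ y) ^ 2 := by
  calc y ⬝ᵥ y = y ⬝ᵥ (∑ i, (v i ⬝ᵥ y) • v i) := by rw [← basis_expand horth y]
  _ = ∑ i, (v i ⬝ᵥ y) * (y ⬝ᵥ v i) := dot_sum_smul y _ v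
  _ = ∑ i, (v i ⬝ᵥ y) ^ 2 := Finset.sum_congr rfl fun i _ => by
        rw [dotProduct_comm y (v i)]; ring

lemma quad_expand (horth : ∀ i j, v i ⬝ᵥ v j = if i = j then (1 : ℝ) else 0)
    (heig : ∀ i, normLap A *ᵥ v i = μ i • v i)
    (y : Fin n → ℝ) : y ⬝ᵥ (normLap A *ᵥ y) = ∑ i, μ i * (v i ⬝ᵥ y) ^ 2 := by
  have hL : normLap A *ᵥ y = ∑ i, (v i ⬝ᵥ y) • (μ i • v i) := by
    conv_lhs => rw [basis_expand horth y]
    rw [show normLap A *ᵥ (∑ i, (v i ⬝ᵥ y) • v i)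
        = ∑ i, normLap A *ᵥ ((v i ⬝ᵥ y) • v i) from
      map_sum (Matrix.mulVecLin (normLap A)) _ _]
    exact Finset.sum_congr rfl fun i _ => by rw [Matrix.mulVec_smul, heig i]
  rw [hL, dot_sum_smul]
  exact Finset.sum_congr rfl fun i _ => by
    rw [dotProduct_smul, smul_eq_mul, dotProduct_comm y (v i)]; ring

lemma mu_eq_quad (horth : ∀ i j, v i ⬝ᵥ v j = if i = j then (1 : ℝ) else 0)
    (heig : ∀ i, normLap A *ᵥ v i = μ i • v i) (i : Fin n) :
    v i ⬝ᵥ (normLap A *ᵥ v i) = μ i := by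
  rw [heig i, dotProduct_smul, smul_eq_mul, horth i i, if_pos rfl, mul_one]

lemma sqrt_wdeg_ne (hdeg : ∀ u, 0 < wdeg A u) (u : Fin n) :
    Real.sqrt (wdeg A u) ≠ 0 := Real.sqrt_ne_zero'.mpr (hdeg u)

lemma eigvec_eq (hdeg : ∀ u, 0 < wdeg A u) (y : Fin n → ℝ) :
    (fun u => (y u / Real.sqrt (wdeg A u)) * Real.sqrt (wdeg A u)) = y := by
  funext u
  exact div_mul_cancel₀ (y u) (sqrt_wdeg_ne hdeg u)

lemma quad_nonneg (hsym : A.IsSymm) (hnn : ∀ u v, 0 ≤ A u v) (hdeg : ∀ u, 0 < wdeg A u)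
    (y : Fin n → ℝ) : 0 ≤ y ⬝ᵥ (normLap A *ᵥ y) := by
  have h := quadForm hsym hdeg (fun u => y u / Real.sqrt (wdeg A u))
  rw [eigvec_eq hdeg y] at h
  rw [h]
  apply div_nonneg _ (by norm_num)
  exact Finset.sum_nonneg fun u _ => Finset.sum_nonneg fun w _ =>
    mul_nonneg (hnn u w) (sq_nonneg _)

lemma mu_nonneg (hsym : A.IsSymm) (hnn : ∀ u v, 0 ≤ A u v) (hdeg : ∀ u, 0 < wdeg A u)
    (horth : ∀ i j, v i ⬝ᵥ v j = if i = j then (1 : ℝ) else 0)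
    (heig : ∀ i, normLap A *ᵥ v i = μ i • v i) (i : Fin n) : 0 ≤ μ i := by
  rw [← mu_eq_quad horth heig i]
  exact quad_nonneg hsym hnn hdeg (v i)

lemma spectral_ineq (horth : ∀ i j, v i ⬝ᵥ v j = if i = j then (1 : ℝ) else 0)
    (heig : ∀ i, normLap A *ᵥ v i = μ i • v i)
    {m : ℝ} (i0 : Fin n) (hm : ∀ i : Fin n, i ≠ i0 → m ≤ μ i)
    (y : Fin n → ℝ) (hy : v i0 ⬝ᵥ y = 0) :
    m * (y ⬝ᵥ y) ≤ y ⬝ᵥ (normLap A *ᵥ y) := by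
  rw [parseval horth y, quad_expand horth heig y, Finset.mul_sum]
  refine Finset.sum_le_sum fun i _ => ?_
  by_cases h : i = i0
  · subst h; rw [hy]; simp
  · exact mul_le_mul_of_nonneg_right (hm i h) (sq_nonneg _)

end Spectral

section Conn

lemma const_of_local (hconn : (SimpleGraph.fromRel fun u v => A u v ≠ 0).Connected)
    (f : Fin n → ℝ) (h : ∀ u w, A u w ≠ 0 → f u = f w) (u w : Fin n) : f u = f w := by
  obtain ⟨p⟩ := hconn u w
  induction p with
  | nil => rfl
  | cons h' p ih =>
    rw [SimpleGraph.fromRel_adj] at h'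
    rcases h'.2 with h2 | h2
    · exact (h _ _ h2).trans ih
    · exact ((h _ _ h2).symm).trans ih

lemma zero_form_const (hnn : ∀ u v, 0 ≤ A u v)
    (hconn : (SimpleGraph.fromRel fun u v => A u v ≠ 0).Connected)
    (f : Fin n → ℝ) (hQ : (∑ u, ∑ w, A u w * (f u - f w) ^ 2) = 0) :
    ∀ u w, f u = f w := by
  have h0 : ∀ u w, A u w * (f u - f w) ^ 2 = 0 := by
    intro u w
    have h1 := (Finset.sum_eq_zero_iff_of_nonneg (fun u _ =>
      Finset.sum_nonneg fun w _ => mul_nonneg (hnn u w) (sq_nonneg _))).mp hQ u (Finset.mem_univ u)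
    exact (Finset.sum_eq_zero_iff_of_nonneg (fun w _ =>
      mul_nonneg (hnn u w) (sq_nonneg _))).mp h1 w (Finset.mem_univ w)
  refine const_of_local hconn f (fun u w hA => ?_)
  have := h0 u w
  rcases mul_eq_zero.mp this with h | h
  · exact absurd h hA
  · have : f u - f w = 0 := by
      have := sq_eq_zero_iff.mp h
      exact this
    linarith

lemma normLap_mulVec_sqrt (hdeg : ∀ u, 0 < wdeg A u) :
    normLap A *ᵥ (fun u => Real.sqrt (wdeg A u)) = 0 := by
  funext u
  rw [normLap_mulVec_apply]
  have h1 : (∑ w, A u w * ((1 / Real.sqrt (wdeg A w)) * Real.sqrt (wdeg A w))) = wdeg A u := by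
    rw [wdeg]
    refine Finset.sum_congr rfl fun w _ => ?_
    rw [one_div_mul_cancel (sqrt_wdeg_ne hdeg w), mul_one]
  rw [h1, Pi.zero_apply]
  have hdd : Real.sqrt (wdeg A u) * Real.sqrt (wdeg A u) = wdeg A u :=
    Real.mul_self_sqrt (hdeg u).le
  have hs := sqrt_wdeg_ne hdeg u
  field_simp
  rw [mul_zero, pow_two, hdd, sub_self]

end Conn

section Hard

lemma colsum (hsym : A.IsSymm) (w : Fin n) : ∑ u, A u w = wdeg A w := by
  rw [wdeg]
  exact Finset.sum_congr rfl fun u _ => hsym.apply w u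

lemma max_sq_add (x : ℝ) : max x 0 ^ 2 + max (-x) 0 ^ 2 = x ^ 2 := by
  rcases le_total x 0 with h | h
  · rw [max_eq_right h, max_eq_left (neg_nonneg.mpr h)]; ring
  · rw [max_eq_left h, max_eq_right (neg_nonpos.mpr h)]; ring

lemma parts_sq (x y : ℝ) :
    (max x 0 - max y 0) ^ 2 + (max (-x) 0 - max (-y) 0) ^ 2 ≤ (x - y) ^ 2 := by
  have hx : max x 0 - max (-x) 0 = x := by
    rcases le_total x 0 with h | h
    · rw [max_eq_right h, max_eq_left (neg_nonneg.mpr h)]; ring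
    · rw [max_eq_left h, max_eq_right (neg_nonpos.mpr h)]; ring
  have hy : max y 0 - max (-y) 0 = y := by
    rcases le_total y 0 with h | h
    · rw [max_eq_right h, max_eq_left (neg_nonneg.mpr h)]; ring
    · rw [max_eq_left h, max_eq_right (neg_nonpos.mpr h)]; ring
  have had : 0 ≤ max x 0 * max (-y) 0 := mul_nonneg (le_max_right _ _) (le_max_right _ _)
  have hbc : 0 ≤ max y 0 * max (-x) 0 := mul_nonneg (le_max_right _ _) (le_max_right _ _)
  have hac : max x 0 * max (-x) 0 = 0 := by
    rcases le_total x 0 with h | h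
    · rw [max_eq_right h, zero_mul]
    · rw [max_eq_right (neg_nonpos.mpr h), mul_zero]
  have hbd : max y 0 * max (-y) 0 = 0 := by
    rcases le_total y 0 with h | h
    · rw [max_eq_right h, zero_mul]
    · rw [max_eq_right (neg_nonpos.mpr h), mul_zero]
  have hcross : (max x 0 - max y 0) * (max (-x) 0 - max (-y) 0) ≤ 0 := by
    nlinarith [had, hbc, hac, hbd]
  have hxy : (x - y) = (max x 0 - max y 0) - (max (-x) 0 - max (-y) 0) := by
    linarith [hx, hy]
  rw [hxy]
  nlinarith [hcross]

lemma abs_eq_maxs (x : ℝ) : max x 0 + max (-x) 0 = |x| := by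
  rcases le_total x 0 with h | h
  · rw [max_eq_right h, max_eq_left (neg_nonneg.mpr h), abs_of_nonpos h]; ring
  · rw [max_eq_left h, max_eq_right (neg_nonpos.mpr h), abs_of_nonneg h]; ring

lemma exists_median (hdeg : ∀ u, 0 < wdeg A u) (hn : 0 < n) (f : Fin n → ℝ) :
    ∃ c : ℝ, volW A (Finset.univ.filter fun u => c < f u) ≤ volW A Finset.univ / 2 ∧
      volW A (Finset.univ.filter fun u => f u < c) ≤ volW A Finset.univ / 2 := by
  have huniv : (Finset.univ : Finset (Fin n)).Nonempty := ⟨⟨0, hn⟩, Finset.mem_univ _⟩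
  have hV : 0 < volW A Finset.univ := volW_pos hdeg huniv
  set V := volW A Finset.univ with hVdef
  set Vals := Finset.univ.image f with hValsdef
  have hVals : Vals.Nonempty := huniv.image f
  set Cand := Vals.filter
    (fun x => V / 2 ≤ volW A (Finset.univ.filter fun u => f u ≤ x)) with hCanddef
  have hCand : Cand.Nonempty := by
    refine ⟨Vals.max' hVals, Finset.mem_filter.mpr ⟨Vals.max'_mem hVals, ?_⟩⟩
    have heq : (Finset.univ.filter fun u => f u ≤ Vals.max' hVals) = Finset.univ :=
      Finset.filter_true_of_mem fun u _ =>
        Finset.le_max' _ _ (Finset.mem_image_of_mem f (Finset.mem_univ u))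
    rw [heq]
    linarith
  set c := Cand.min' hCand with hcdef
  have hc_mem := Cand.min'_mem hCand
  have hcgood : V / 2 ≤ volW A (Finset.univ.filter fun u => f u ≤ c) :=
    (Finset.mem_filter.mp hc_mem).2
  refine ⟨c, ?_, ?_⟩
  · have hcompl : (Finset.univ.filter fun u => c < f u)
        = (Finset.univ.filter fun u => f u ≤ c)ᶜ := by
      ext u; simp [not_le]
    have hsplit := volW_add_compl (A := A) (Finset.univ.filter fun u => f u ≤ c)
    rw [hcompl]
    linarith
  · by_cases hne : (Finset.univ.filter fun u => f u < c).Nonempty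
    · set T := Finset.univ.filter fun u => f u < c with hTdef
      have hTim : (T.image f).Nonempty := hne.image f
      obtain ⟨u0, hu0T, hu0⟩ := Finset.mem_image.mp ((T.image f).max'_mem hTim)
      have hc'lt : f u0 < c := (Finset.mem_filter.mp hu0T).2
      have hc'Vals : f u0 ∈ Vals := Finset.mem_image_of_mem f (Finset.mem_univ u0)
      have hc'not : f u0 ∉ Cand := fun hmem => (not_le.mpr hc'lt) (Cand.min'_le _ hmem)
      have hc'small : volW A (Finset.univ.filter fun u => f u ≤ f u0) < V / 2 := by
        by_contra hcon
        exact hc'not (Finset.mem_filter.mpr ⟨hc'Vals, not_lt.mp hcon⟩)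
      have hsub : T ⊆ Finset.univ.filter fun u => f u ≤ f u0 := by
        intro u huT
        refine Finset.mem_filter.mpr ⟨Finset.mem_univ u, ?_⟩
        calc f u ≤ (T.image f).max' hTim := Finset.le_max' _ _ (Finset.mem_image_of_mem f huT)
        _ = f u0 := hu0.symm
      have := volW_mono hdeg hsub
      linarith
    · rw [Finset.not_nonempty_iff_eq_empty] at hne
      rw [hne]
      have : volW A (∅ : Finset (Fin n)) = 0 := by simp [volW]
      rw [this]
      linarith

lemma crossing_le (hsym : A.IsSymm) (hnn : ∀ u v, 0 ≤ A u v)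
    (g : Fin n → ℝ) (hg : ∀ u, 0 ≤ g u) {K : ℝ} (hK : 0 ≤ K)
    (hQ : (∑ u, ∑ w, A u w * (g u - g w) ^ 2) ≤ K ^ 2 * ∑ u, wdeg A u * g u ^ 2) :
    ∑ u, ∑ w, A u w * max (g u ^ 2 - g w ^ 2) 0 ≤ K * ∑ u, wdeg A u * g u ^ 2 := by
  set D := ∑ u, wdeg A u * g u ^ 2 with hDdef
  have hD0 : 0 ≤ D := Finset.sum_nonneg fun u _ =>
    mul_nonneg (Finset.sum_nonneg fun w _ => hnn u w) (sq_nonneg _)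
  set C := ∑ u, ∑ w, A u w * max (g u ^ 2 - g w ^ 2) 0 with hCdef
  have hC0 : 0 ≤ C := Finset.sum_nonneg fun u _ => Finset.sum_nonneg fun w _ =>
    mul_nonneg (hnn u w) (le_max_right _ _)
  -- symmetrization
  have hswap : C = ∑ u, ∑ w, A u w * max (g w ^ 2 - g u ^ 2) 0 := by
    rw [hCdef, Finset.sum_comm]
    exact Finset.sum_congr rfl fun u _ => Finset.sum_congr rfl fun w _ => by
      rw [hsym.apply u w]
  have h2C : 2 * C = ∑ u, ∑ w, A u w * |g u ^ 2 - g w ^ 2| := by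
    rw [two_mul]
    nth_rewrite 2 [hswap]
    rw [← Finset.sum_add_distrib]
    refine Finset.sum_congr rfl fun u _ => ?_
    rw [← Finset.sum_add_distrib]
    refine Finset.sum_congr rfl fun w _ => ?_
    rw [← mul_add]
    congr 1
    rw [show g w ^ 2 - g u ^ 2 = -(g u ^ 2 - g w ^ 2) by ring]
    exact abs_eq_maxs _
  -- Cauchy-Schwarz
  set F : Fin n × Fin n → ℝ := fun p => Real.sqrt (A p.1 p.2) * |g p.1 - g p.2| with hFdef
  set G : Fin n × Fin n → ℝ := fun p => Real.sqrt (A p.1 p.2) * (g p.1 + g p.2) with hGdef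
  have hFG : ∀ p : Fin n × Fin n, F p * G p = A p.1 p.2 * |g p.1 ^ 2 - g p.2 ^ 2| := by
    intro p
    have : |g p.1 ^ 2 - g p.2 ^ 2| = |g p.1 - g p.2| * (g p.1 + g p.2) := by
      rw [show g p.1 ^ 2 - g p.2 ^ 2 = (g p.1 - g p.2) * (g p.1 + g p.2) by ring, abs_mul,
        abs_of_nonneg (add_nonneg (hg p.1) (hg p.2))]
    rw [this, hFdef, hGdef]
    have hA : Real.sqrt (A p.1 p.2) * Real.sqrt (A p.1 p.2) = A p.1 p.2 :=
      Real.mul_self_sqrt (hnn p.1 p.2)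
    rw [show Real.sqrt (A p.1 p.2) * |g p.1 - g p.2| * (Real.sqrt (A p.1 p.2) * (g p.1 + g p.2))
      = (Real.sqrt (A p.1 p.2) * Real.sqrt (A p.1 p.2)) * (|g p.1 - g p.2| * (g p.1 + g p.2))
      from by ring, hA]
  have hFsq : ∀ p : Fin n × Fin n, F p ^ 2 = A p.1 p.2 * (g p.1 - g p.2) ^ 2 := by
    intro p
    rw [hFdef, mul_pow, sq_abs, Real.sq_sqrt (hnn p.1 p.2)]
  have hGsq : ∀ p : Fin n × Fin n, G p ^ 2 = A p.1 p.2 * (g p.1 + g p.2) ^ 2 := by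
    intro p
    rw [hGdef, mul_pow, Real.sq_sqrt (hnn p.1 p.2)]
  have hcs := Finset.sum_mul_sq_le_sq_mul_sq Finset.univ F G
  have hprod : ∀ (h : Fin n × Fin n → ℝ), ∑ p : Fin n × Fin n, h p = ∑ u, ∑ w, h (u, w) := by
    intro h
    rw [← Finset.univ_product_univ, Finset.sum_product]
  have e1 : ∑ p : Fin n × Fin n, F p * G p = 2 * C := by
    rw [h2C, hprod]
    exact Finset.sum_congr rfl fun u _ => Finset.sum_congr rfl fun w _ => hFG (u, w)
  have e2 : ∑ p : Fin n × Fin n, F p ^ 2 = ∑ u, ∑ w, A u w * (g u - g w) ^ 2 := by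
    rw [hprod]
    exact Finset.sum_congr rfl fun u _ => Finset.sum_congr rfl fun w _ => hFsq (u, w)
  have e3 : ∑ p : Fin n × Fin n, G p ^ 2 ≤ 4 * D := by
    rw [hprod]
    have hpt : ∀ u w, G (u, w) ^ 2 ≤ 2 * (A u w * g u ^ 2) + 2 * (A u w * g w ^ 2) := by
      intro u w
      rw [hGsq (u, w)]
      nlinarith [sq_nonneg (g u - g w), hnn u w, sq_nonneg (g u + g w)]
    calc ∑ u, ∑ w, G (u, w) ^ 2
        ≤ ∑ u, ∑ w, (2 * (A u w * g u ^ 2) + 2 * (A u w * g w ^ 2)) :=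
          Finset.sum_le_sum fun u _ => Finset.sum_le_sum fun w _ => hpt u w
      _ = 4 * D := by
          rw [hDdef]
          simp only [Finset.sum_add_distrib]
          have ha : ∑ u, ∑ w, 2 * (A u w * g u ^ 2) = 2 * D := by
            rw [hDdef, Finset.mul_sum]
            refine Finset.sum_congr rfl fun u _ => ?_
            rw [wdeg, Finset.sum_mul, Finset.mul_sum]
          have hb : ∑ u, ∑ w, 2 * (A u w * g w ^ 2) = 2 * D := by
            rw [Finset.sum_comm, hDdef, Finset.mul_sum]
            refine Finset.sum_congr rfl fun w _ => ?_
            rw [← colsum hsym w, Finset.sum_mul, Finset.mul_sum]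
          rw [hDdef] at ha hb
          rw [ha, hb]
          ring
  have hsq : (2 * C) ^ 2 ≤ (K ^ 2 * D) * (4 * D) := by
    rw [← e1]
    calc (∑ p : Fin n × Fin n, F p * G p) ^ 2
        ≤ (∑ p : Fin n × Fin n, F p ^ 2) * ∑ p : Fin n × Fin n, G p ^ 2 := hcs
      _ ≤ (K ^ 2 * D) * (4 * D) := by
          apply mul_le_mul (e2 ▸ hQ) e3 (Finset.sum_nonneg fun p _ => sq_nonneg _)
            (by positivity)
  have : (2 * C) ^ 2 ≤ (2 * (K * D)) ^ 2 := by nlinarith [hsq]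
  have h2 : 2 * C ≤ 2 * (K * D) := by
    have hKD : 0 ≤ 2 * (K * D) := by positivity
    nlinarith [this, hC0]
  linarith

open MeasureTheory in
lemma exists_sweep_cut (hnn : ∀ u v, 0 ≤ A u v) (hdeg : ∀ u, 0 < wdeg A u)
    (g : Fin n → ℝ) (hg : ∀ u, 0 ≤ g u)
    (hD : 0 < ∑ u, wdeg A u * g u ^ 2) {K : ℝ} (hK : 0 ≤ K)
    (hC : ∑ u, ∑ w, A u w * max (g u ^ 2 - g w ^ 2) 0 ≤ K * ∑ u, wdeg A u * g u ^ 2) :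
    ∃ S : Finset (Fin n), S.Nonempty ∧ (∀ u ∈ S, g u ≠ 0) ∧ cutW A S ≤ K * volW A S := by
  classical
  by_contra hcon
  push_neg at hcon
  -- basic integrable blocks
  have hblock : ∀ (c a b : ℝ), Integrable (fun t => c * (Set.Ico a b).indicator
      (fun _ => (1:ℝ)) t) := by
    intro c a b
    refine Integrable.const_mul ?_ c
    rw [integrable_indicator_iff measurableSet_Ico]
    exact integrableOn_const (by simp [Real.volume_Ico]) (by simp)
  have hbint : ∀ (c a b : ℝ), ∫ t, c * (Set.Ico a b).indicator (fun _ => (1:ℝ)) t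
      = c * max (b - a) 0 := by
    intro c a b
    rw [MeasureTheory.integral_const_mul, MeasureTheory.integral_indicator_const _ measurableSet_Ico]
    simp [Real.volume_Ico, ENNReal.toReal_ofReal']
  set cutF : ℝ → ℝ := fun t => ∑ p : Fin n × Fin n,
    A p.1 p.2 * (Set.Ico (g p.2 ^ 2) (g p.1 ^ 2)).indicator (fun _ => (1:ℝ)) t with hcutF
  set volF : ℝ → ℝ := fun t => ∑ u,
    wdeg A u * (Set.Ico 0 (g u ^ 2)).indicator (fun _ => (1:ℝ)) t with hvolF
  have hprod : ∀ (h : Fin n × Fin n → ℝ), ∑ p : Fin n × Fin n, h p = ∑ u, ∑ w, h (u, w) := by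
    intro h
    rw [← Finset.univ_product_univ, Finset.sum_product]
  have hcut_int : Integrable cutF := by
    rw [hcutF]
    exact integrable_finset_sum _ (fun p _ => hblock _ _ _)
  have hvol_int : Integrable volF := by
    rw [hvolF]
    exact integrable_finset_sum _ (fun u _ => hblock _ _ _)
  have hcut_val : ∫ t, cutF t = ∑ u, ∑ w, A u w * max (g u ^ 2 - g w ^ 2) 0 := by
    rw [hcutF, MeasureTheory.integral_finset_sum _ (fun p _ => hblock _ _ _), hprod]
    exact Finset.sum_congr rfl fun u _ => Finset.sum_congr rfl fun w _ => hbint _ _ _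
  have hvol_val : ∫ t, volF t = ∑ u, wdeg A u * g u ^ 2 := by
    rw [hvolF, MeasureTheory.integral_finset_sum _ (fun u _ => hblock _ _ _)]
    refine Finset.sum_congr rfl fun u _ => ?_
    rw [hbint]
    rw [sub_zero, max_eq_left (sq_nonneg (g u))]
  -- identification with cut/vol of threshold sets
  set St : ℝ → Finset (Fin n) := fun t => Finset.univ.filter (fun u => t < g u ^ 2) with hSt
  have hcut_eq : ∀ t : ℝ, cutF t = cutW A (St t) := by
    intro t
    have hstep : cutF t = ∑ u, ∑ w,
        A u w * (Set.Ico (g w ^ 2) (g u ^ 2)).indicator (fun _ => (1:ℝ)) t := by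
      rw [hcutF]; exact hprod _
    have hcompl : (Finset.univ.filter (fun u => t < g u ^ 2))ᶜ
        = Finset.univ.filter (fun u => ¬ t < g u ^ 2) := by
      ext u; simp
    rw [hstep, cutW, hSt, hcompl]
    simp only [Finset.sum_filter]
    refine Finset.sum_congr rfl fun u _ => ?_
    by_cases h1 : t < g u ^ 2
    · rw [if_pos h1]
      refine Finset.sum_congr rfl fun w _ => ?_
      by_cases h2 : t < g w ^ 2
      · simp [Set.indicator_apply, Set.mem_Ico, h1, h2, not_le.mpr h2]
      · simp [Set.indicator_apply, Set.mem_Ico, h1, h2, not_lt.mp h2]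
    · rw [if_neg h1]
      refine Finset.sum_eq_zero fun w _ => ?_
      simp [Set.indicator_apply, Set.mem_Ico, h1]
  have hvol_eq : ∀ t : ℝ, 0 ≤ t → volF t = volW A (St t) := by
    intro t ht
    have hstep : volF t = ∑ u, wdeg A u * (Set.Ico 0 (g u ^ 2)).indicator (fun _ => (1:ℝ)) t := by
      rw [hvolF]
    rw [hstep, volW, hSt]
    simp only [Finset.sum_filter]
    refine Finset.sum_congr rfl fun u _ => ?_
    by_cases h1 : t < g u ^ 2 <;> simp [Set.indicator_apply, Set.mem_Ico, h1, ht]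
  -- the maximum threshold
  obtain ⟨u1, hu1⟩ : ∃ u, g u ≠ 0 := by
    by_contra hall
    push_neg at hall
    rw [show (∑ u, wdeg A u * g u ^ 2) = 0 from Finset.sum_eq_zero fun u _ => by
      rw [hall u]; ring] at hD
    exact lt_irrefl 0 hD
  have hne_univ : (Finset.univ : Finset (Fin n)).Nonempty := ⟨u1, Finset.mem_univ u1⟩
  set T := Finset.univ.sup' hne_univ (fun u => g u ^ 2) with hT
  have hT0 : 0 < T := by
    have := Finset.le_sup' (fun u => g u ^ 2) (Finset.mem_univ u1)
    have h1 : 0 < g u1 ^ 2 := by positivity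
    linarith
  -- pointwise positivity on [0, T)
  have hpos : ∀ t ∈ Set.Ico (0:ℝ) T, 0 < cutF t - K * volF t := by
    rintro t ⟨ht0, htT⟩
    have hSne : (St t).Nonempty := by
      obtain ⟨u, -, hu⟩ := (Finset.lt_sup'_iff hne_univ).mp
        (show t < Finset.univ.sup' hne_univ (fun u => g u ^ 2) from hT ▸ htT)
      exact ⟨u, Finset.mem_filter.mpr ⟨Finset.mem_univ u, hu⟩⟩
    have hsupp : ∀ u ∈ St t, g u ≠ 0 := by
      intro u hu
      have := (Finset.mem_filter.mp hu).2
      intro h0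
      rw [h0] at this
      simp at this
      linarith
    have := hcon (St t) hSne hsupp
    rw [hcut_eq t, hvol_eq t ht0]
    linarith
  -- vanishing outside [0, T)
  have hvanish : ∀ t, t ∉ Set.Ico (0:ℝ) T → cutF t - K * volF t = 0 := by
    intro t ht
    rw [Set.mem_Ico, not_and_or] at ht
    have hcut0 : cutF t = 0 := by
      rw [hcutF]
      refine Finset.sum_eq_zero fun p _ => ?_
      rw [Set.indicator_apply]
      rcases ht with ht | ht
      · push_neg at ht
        have : ¬ (g p.2 ^ 2 ≤ t ∧ t < g p.1 ^ 2) := by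
          intro ⟨h1, h2⟩
          linarith [sq_nonneg (g p.2)]
        simp [Set.mem_Ico, this]
      · push_neg at ht
        have hle : g p.1 ^ 2 ≤ T := Finset.le_sup' (fun u => g u ^ 2) (Finset.mem_univ p.1)
        have : ¬ (g p.2 ^ 2 ≤ t ∧ t < g p.1 ^ 2) := by
          intro ⟨h1, h2⟩
          linarith
        simp [Set.mem_Ico, this]
    have hvol0 : volF t = 0 := by
      rw [hvolF]
      refine Finset.sum_eq_zero fun u _ => ?_
      rw [Set.indicator_apply]
      rcases ht with ht | ht
      · push_neg at ht
        have : ¬ ((0:ℝ) ≤ t ∧ t < g u ^ 2) := fun ⟨h1, _⟩ => absurd h1 (not_le.mpr ht)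
        simp [Set.mem_Ico, this]
      · push_neg at ht
        have hle : g u ^ 2 ≤ T := Finset.le_sup' (fun u => g u ^ 2) (Finset.mem_univ u)
        have : ¬ ((0:ℝ) ≤ t ∧ t < g u ^ 2) := fun ⟨_, h2⟩ => by linarith
        simp [Set.mem_Ico, this]
    rw [hcut0, hvol0]; ring
  -- integral is nonpositive
  have hint : Integrable (fun t => cutF t - K * volF t) := hcut_int.sub (hvol_int.const_mul K)
  have hneg : ∫ t, (cutF t - K * volF t) ≤ 0 := by
    rw [MeasureTheory.integral_sub hcut_int (hvol_int.const_mul K)]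
    have : ∫ t, K * volF t = K * ∑ u, wdeg A u * g u ^ 2 := by
      rw [MeasureTheory.integral_const_mul, hvol_val]
    rw [this, hcut_val]
    linarith
  -- but it is positive
  have hset : ∫ t in Set.Ico (0:ℝ) T, (cutF t - K * volF t)
      = ∫ t, (cutF t - K * volF t) :=
    MeasureTheory.setIntegral_eq_integral_of_forall_compl_eq_zero hvanish
  have hposint : 0 < ∫ t in Set.Ico (0:ℝ) T, (cutF t - K * volF t) := by
    rw [MeasureTheory.setIntegral_pos_iff_support_of_nonneg_ae]
    · have hsub : Set.Ico (0:ℝ) T ⊆ Function.support (fun t => cutF t - K * volF t)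
          ∩ Set.Ico (0:ℝ) T := by
        intro t ht
        exact ⟨ne_of_gt (hpos t ht), ht⟩
      calc (0:ENNReal) < MeasureTheory.volume (Set.Ico (0:ℝ) T) := by
            simp [Real.volume_Ico, hT0]
        _ ≤ _ := measure_mono hsub
    · rw [Filter.EventuallyLE, MeasureTheory.ae_restrict_iff' measurableSet_Ico]
      exact Filter.Eventually.of_forall fun t ht => (hpos t ht).le
    · exact hint.integrableOn
  rw [hset] at hposint
  linarith

end Hard

end CheegerAux

open CheegerAux

/-- Cheeger's inequality: `λ₂/2 ≤ φ ≤ √(2 λ₂)`. -/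
theorem stmt12 {n : ℕ} (hn : 2 ≤ n) (A : Matrix (Fin n) (Fin n) ℝ)
    (hsym : A.IsSymm) (hnn : ∀ u v, 0 ≤ A u v)
    (hdeg : ∀ u, 0 < wdeg A u)
    (hconn : (SimpleGraph.fromRel fun u v => A u v ≠ 0).Connected)
    (μ : Fin n → ℝ) (v : Fin n → Fin n → ℝ)
    (hmono : Monotone μ)
    (horth : ∀ i j, v i ⬝ᵥ v j = if i = j then (1 : ℝ) else 0)
    (heig : ∀ i, normLap A *ᵥ v i = μ i • v i) :
    μ ⟨1, by omega⟩ / 2 ≤ conductance A ∧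
      conductance A ≤ Real.sqrt (2 * μ ⟨1, by omega⟩) := by
  classical
  have hi0lt : 0 < n := by omega
  have hi1lt : 1 < n := by omega
  set i0 : Fin n := ⟨0, hi0lt⟩ with hi0def
  set i1 : Fin n := ⟨1, hi1lt⟩ with hi1def
  have hne01 : i0 ≠ i1 := by
    intro h
    have := Fin.mk.injEq 0 hi0lt 1 hi1lt ▸ h
    simp [Fin.ext_iff] at h
  have hm : ∀ i : Fin n, i ≠ i0 → μ i1 ≤ μ i := by
    intro i hi
    apply hmono
    have hval : i.val ≠ 0 := fun h => hi (Fin.ext h)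
    rw [Fin.le_def]
    simp only [hi1def]
    omega
  have hμ1 : 0 ≤ μ i1 := mu_nonneg hsym hnn hdeg horth heig i1
  have huniv_ne : (Finset.univ : Finset (Fin n)).Nonempty := ⟨i0, Finset.mem_univ _⟩
  have hvol_pos : 0 < volW A Finset.univ := volW_pos hdeg huniv_ne
  -- ======================== EASY DIRECTION ========================
  have easy : ∀ S : Finset (Fin n), S.Nonempty → S ≠ Finset.univ →
      μ i1 / 2 ≤ cutW A S / min (volW A S) (volW A Sᶜ) := by
    intro S hS hSu
    have hScne : Sᶜ.Nonempty := by
      rw [← Finset.card_pos, Finset.card_compl]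
      have h1 : S.card < Fintype.card (Fin n) := by
        rw [← Finset.card_univ]
        exact Finset.card_lt_card (Finset.ssubset_univ_iff.mpr hSu)
      omega
    set m := min (volW A S) (volW A Sᶜ) with hmdef
    have hm0 : 0 < m := lt_min (volW_pos hdeg hS) (volW_pos hdeg hScne)
    set p := ∑ u ∈ S, v i0 u * Real.sqrt (wdeg A u) with hpdef
    set q := ∑ u ∈ Sᶜ, v i0 u * Real.sqrt (wdeg A u) with hqdef
    obtain ⟨a, b, hab, horthy⟩ : ∃ a b : ℝ, ¬(a = 0 ∧ b = 0) ∧ a * p + b * q = 0 := by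
      by_cases h : p = 0 ∧ q = 0
      · exact ⟨1, 0, by norm_num, by rw [h.1, h.2]; ring⟩
      · refine ⟨q, -p, fun hh => h ⟨by linarith [neg_eq_zero.mp hh.2], hh.1⟩, by ring⟩
    set f : Fin n → ℝ := fun u => if u ∈ S then a else b with hfdef
    set y : Fin n → ℝ := fun u => f u * Real.sqrt (wdeg A u) with hydef
    have hyv : v i0 ⬝ᵥ y = 0 := by
      have hdot : v i0 ⬝ᵥ y = ∑ u, v i0 u * y u := rfl
      rw [hdot, ← Finset.sum_add_sum_compl S]
      have h1 : ∑ u ∈ S, v i0 u * y u = a * p := by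
        rw [hpdef, Finset.mul_sum]
        refine Finset.sum_congr rfl fun u hu => ?_
        rw [hydef]
        simp only [hfdef, if_pos hu]
        ring
      have h2 : ∑ u ∈ Sᶜ, v i0 u * y u = b * q := by
        rw [hqdef, Finset.mul_sum]
        refine Finset.sum_congr rfl fun u hu => ?_
        rw [hydef]
        simp only [hfdef, if_neg (Finset.mem_compl.mp hu)]
        ring
      rw [h1, h2, horthy]
    have hyy : y ⬝ᵥ y = a ^ 2 * volW A S + b ^ 2 * volW A Sᶜ := by
      have hdot : y ⬝ᵥ y = ∑ u, y u * y u := rfl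
      rw [hdot, ← Finset.sum_add_sum_compl S]
      congr 1
      · rw [volW, Finset.mul_sum]
        refine Finset.sum_congr rfl fun u hu => ?_
        rw [hydef]
        simp only [hfdef, if_pos hu]
        rw [show a * Real.sqrt (wdeg A u) * (a * Real.sqrt (wdeg A u))
          = a ^ 2 * (Real.sqrt (wdeg A u) * Real.sqrt (wdeg A u)) from by ring,
          Real.mul_self_sqrt (hdeg u).le]
      · rw [volW, Finset.mul_sum]
        refine Finset.sum_congr rfl fun u hu => ?_
        rw [hydef]
        simp only [hfdef, if_neg (Finset.mem_compl.mp hu)]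
        rw [show b * Real.sqrt (wdeg A u) * (b * Real.sqrt (wdeg A u))
          = b ^ 2 * (Real.sqrt (wdeg A u) * Real.sqrt (wdeg A u)) from by ring,
          Real.mul_self_sqrt (hdeg u).le]
    have hquad : y ⬝ᵥ (normLap A *ᵥ y) = cutW A S * (a - b) ^ 2 := by
      rw [hydef, quadForm hsym hdeg f]
      have hcsym : ∑ u ∈ Sᶜ, ∑ w ∈ S, A u w = cutW A S := by
        rw [cutW]; refine Finset.sum_comm.trans ?_
        exact Finset.sum_congr rfl fun w _ => Finset.sum_congr rfl fun u _ => hsym.apply w u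
      have hsplit : ∑ u, ∑ w, A u w * (f u - f w) ^ 2
          = (a - b) ^ 2 * ((∑ u ∈ S, ∑ w ∈ Sᶜ, A u w) + (∑ u ∈ Sᶜ, ∑ w ∈ S, A u w)) := by
        rw [← Finset.sum_add_sum_compl S (fun u => ∑ w, A u w * (f u - f w) ^ 2)]
        have e1 : ∑ u ∈ S, ∑ w, A u w * (f u - f w) ^ 2
            = (a - b) ^ 2 * ∑ u ∈ S, ∑ w ∈ Sᶜ, A u w := by
          rw [Finset.mul_sum]
          refine Finset.sum_congr rfl fun u hu => ?_
          rw [← Finset.sum_add_sum_compl S (fun w => A u w * (f u - f w) ^ 2),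
            show ∑ w ∈ S, A u w * (f u - f w) ^ 2 = 0 from Finset.sum_eq_zero fun w hw => by
              simp only [hfdef, if_pos hu, if_pos hw]; ring,
            zero_add, Finset.mul_sum]
          refine Finset.sum_congr rfl fun w hw => ?_
          simp only [hfdef, if_pos hu, if_neg (Finset.mem_compl.mp hw)]
          ring
        have e2 : ∑ u ∈ Sᶜ, ∑ w, A u w * (f u - f w) ^ 2
            = (a - b) ^ 2 * ∑ u ∈ Sᶜ, ∑ w ∈ S, A u w := by
          rw [Finset.mul_sum]
          refine Finset.sum_congr rfl fun u hu => ?_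
          rw [← Finset.sum_add_sum_compl S (fun w => A u w * (f u - f w) ^ 2),
            show ∑ w ∈ Sᶜ, A u w * (f u - f w) ^ 2 = 0 from Finset.sum_eq_zero fun w hw => by
              simp only [hfdef, if_neg (Finset.mem_compl.mp hu),
                if_neg (Finset.mem_compl.mp hw)]; ring,
            add_zero, Finset.mul_sum]
          refine Finset.sum_congr rfl fun w hw => ?_
          simp only [hfdef, if_neg (Finset.mem_compl.mp hu), if_pos hw]
          ring
        rw [e1, e2]
        ring
      rw [hsplit, hcsym]
      rw [show ∑ u ∈ S, ∑ w ∈ Sᶜ, A u w = cutW A S from rfl]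
      ring
    have hspec := spectral_ineq horth heig i0 hm y hyv
    rw [hyy, hquad] at hspec
    set P := a ^ 2 * volW A S + b ^ 2 * volW A Sᶜ with hPdef
    have hP : 0 < P := by
      rcases not_and_or.mp hab with h | h
      · have : 0 < a ^ 2 * volW A S :=
          mul_pos (by positivity) (volW_pos hdeg hS)
        have h2 : 0 ≤ b ^ 2 * volW A Sᶜ :=
          mul_nonneg (sq_nonneg b) (volW_nonneg hdeg _)
        rw [hPdef]; linarith
      · have : 0 < b ^ 2 * volW A Sᶜ :=
          mul_pos (by positivity) (volW_pos hdeg hScne)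
        have h2 : 0 ≤ a ^ 2 * volW A S :=
          mul_nonneg (sq_nonneg a) (volW_nonneg hdeg _)
        rw [hPdef]; linarith
    have hvS : m ≤ volW A S := min_le_left _ _
    have hvSc : m ≤ volW A Sᶜ := min_le_right _ _
    have hcut0 : 0 ≤ cutW A S := cutW_nonneg hnn S
    rw [le_div_iff₀ hm0]
    have t1 : a ^ 2 * m ≤ a ^ 2 * volW A S := mul_le_mul_of_nonneg_left hvS (sq_nonneg a)
    have t2 : b ^ 2 * m ≤ b ^ 2 * volW A Sᶜ := mul_le_mul_of_nonneg_left hvSc (sq_nonneg b)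
    have t3 : (a - b) ^ 2 * m ≤ 2 * (a ^ 2 * m) + 2 * (b ^ 2 * m) := by
      nlinarith [mul_nonneg (sq_nonneg (a + b)) hm0.le]
    have h1 : (a - b) ^ 2 * m ≤ 2 * P := by rw [hPdef]; linarith
    have h2 : cutW A S * ((a - b) ^ 2 * m) ≤ cutW A S * (2 * P) :=
      mul_le_mul_of_nonneg_left h1 hcut0
    have h3 : μ i1 * P * m ≤ cutW A S * (a - b) ^ 2 * m :=
      mul_le_mul_of_nonneg_right hspec hm0.le
    have h4 : (μ i1 * m) * P ≤ (2 * cutW A S) * P := by nlinarith [h2, h3]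
    have h5 : μ i1 * m ≤ 2 * cutW A S := le_of_mul_le_mul_right h4 hP
    linarith
  have hlow : μ i1 / 2 ≤ conductance A := by
    have hsing : ({i0} : Finset (Fin n)) ≠ Finset.univ := by
      intro h
      have h1 : ({i0} : Finset (Fin n)).card = (Finset.univ : Finset (Fin n)).card := by rw [h]
      rw [Finset.card_singleton, Finset.card_univ, Fintype.card_fin] at h1
      omega
    rw [conductance]
    have hmem : ∃ S : Finset (Fin n), S.Nonempty ∧ S ≠ Finset.univ ∧
        (cutW A {i0} / min (volW A {i0}) (volW A ({i0} : Finset (Fin n))ᶜ) : ℝ)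
          = cutW A S / min (volW A S) (volW A Sᶜ) :=
      ⟨{i0}, Finset.singleton_nonempty i0, hsing, rfl⟩
    refine le_csInf ⟨_, hmem⟩ ?_
    rintro r ⟨S, hS1, hS2, rfl⟩
    exact easy S hS1 hS2
  -- ======================== POSITIVITY OF μ₁ ========================
  have hμpos : 0 < μ i1 := by
    rcases lt_or_eq_of_le hμ1 with h | h
    · exact h
    exfalso
    have hμ1z : μ i1 = 0 := h.symm
    have hμ0z : μ i0 = 0 := by
      have h1 : μ i0 ≤ μ i1 := hmono (show i0 ≤ i1 from by
        rw [Fin.le_def]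
        simp only [hi0def, hi1def]
        omega)
      have h2 : 0 ≤ μ i0 := mu_nonneg hsym hnn hdeg horth heig i0
      linarith
    have hqf : ∀ i : Fin n, μ i = 0 →
        ∀ u w, v i u / Real.sqrt (wdeg A u) = v i w / Real.sqrt (wdeg A w) := by
      intro i hi
      apply zero_form_const hnn hconn
      have h1 := quadForm hsym hdeg (fun u => v i u / Real.sqrt (wdeg A u))
      rw [eigvec_eq hdeg (v i), mu_eq_quad horth heig i, hi] at h1
      linarith
    set c0 := v i0 i0 / Real.sqrt (wdeg A i0) with hc0def
    set c1 := v i1 i0 / Real.sqrt (wdeg A i0) with hc1def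
    have hv0 : ∀ u, v i0 u = c0 * Real.sqrt (wdeg A u) := by
      intro u
      have := hqf i0 hμ0z u i0
      rw [div_eq_iff (sqrt_wdeg_ne hdeg u)] at this
      rw [this, hc0def]
    have hv1 : ∀ u, v i1 u = c1 * Real.sqrt (wdeg A u) := by
      intro u
      have := hqf i1 hμ1z u i0
      rw [div_eq_iff (sqrt_wdeg_ne hdeg u)] at this
      rw [this, hc1def]
    have hsumd : ∑ u, Real.sqrt (wdeg A u) * Real.sqrt (wdeg A u) = volW A Finset.univ := by
      rw [volW]
      exact Finset.sum_congr rfl fun u _ => Real.mul_self_sqrt (hdeg u).le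
    have hdot01 : c0 * c1 * volW A Finset.univ = 0 := by
      have h1 := horth i0 i1
      rw [if_neg hne01] at h1
      calc c0 * c1 * volW A Finset.univ = ∑ u, v i0 u * v i1 u := by
            rw [← hsumd, Finset.mul_sum]
            exact Finset.sum_congr rfl fun u _ => by rw [hv0 u, hv1 u]; ring
      _ = 0 := h1
    have hdot00 : c0 ^ 2 * volW A Finset.univ = 1 := by
      have h1 := horth i0 i0
      rw [if_pos rfl] at h1
      calc c0 ^ 2 * volW A Finset.univ = ∑ u, v i0 u * v i0 u := by
            rw [← hsumd, Finset.mul_sum]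
            exact Finset.sum_congr rfl fun u _ => by rw [hv0 u]; ring
      _ = 1 := h1
    have hdot11 : c1 ^ 2 * volW A Finset.univ = 1 := by
      have h1 := horth i1 i1
      rw [if_pos rfl] at h1
      calc c1 ^ 2 * volW A Finset.univ = ∑ u, v i1 u * v i1 u := by
            rw [← hsumd, Finset.mul_sum]
            exact Finset.sum_congr rfl fun u _ => by rw [hv1 u]; ring
      _ = 1 := h1
    have hc0ne : c0 ≠ 0 := by
      intro hz
      rw [hz] at hdot00
      norm_num at hdot00
    have hc1ne : c1 ≠ 0 := by
      intro hz
      rw [hz] at hdot11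
      norm_num at hdot11
    have := mul_ne_zero (mul_ne_zero hc0ne hc1ne) hvol_pos.ne'
    exact this hdot01
  -- ======================== ORTHOGONALITY TO √d ========================
  set sq : Fin n → ℝ := fun u => Real.sqrt (wdeg A u) with hsqdef
  have hworth : v i1 ⬝ᵥ sq = 0 := by
    have h1 : sq ⬝ᵥ (normLap A *ᵥ sq) = 0 := by
      rw [hsqdef, normLap_mulVec_sqrt hdeg]
      simp [dotProduct]
    rw [quad_expand horth heig sq] at h1
    have hterm := (Finset.sum_eq_zero_iff_of_nonneg (fun i _ =>
      mul_nonneg (mu_nonneg hsym hnn hdeg horth heig i) (sq_nonneg _))).mp h1 i1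
      (Finset.mem_univ i1)
    rcases mul_eq_zero.mp hterm with h | h
    · exact absurd h hμpos.ne'
    · exact pow_eq_zero_iff (by norm_num) |>.mp h
  -- ======================== TEST FUNCTION ========================
  set f : Fin n → ℝ := fun u => v i1 u / Real.sqrt (wdeg A u) with hfdef
  have hfv : (fun u => f u * Real.sqrt (wdeg A u)) = v i1 := eigvec_eq hdeg (v i1)
  have hD1 : ∑ u, wdeg A u * f u ^ 2 = 1 := by
    have hpt : ∀ u, wdeg A u * f u ^ 2 = v i1 u * v i1 u := by
      intro u
      have hss : Real.sqrt (wdeg A u) ^ 2 = wdeg A u := Real.sq_sqrt (hdeg u).le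
      rw [hfdef]
      simp only
      rw [div_pow, hss, mul_comm (wdeg A u), div_mul_cancel₀ _ (hdeg u).ne', pow_two]
    rw [Finset.sum_congr rfl fun u _ => hpt u]
    have := horth i1 i1
    rw [if_pos rfl] at this
    exact this
  have hQ1 : ∑ u, ∑ w, A u w * (f u - f w) ^ 2 = 2 * μ i1 := by
    have h1 := quadForm hsym hdeg f
    rw [hfv, mu_eq_quad horth heig i1] at h1
    linarith
  have hsum0 : ∑ u, wdeg A u * f u = 0 := by
    have hpt : ∀ u, wdeg A u * f u = v i1 u * Real.sqrt (wdeg A u) := by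
      intro u
      have hne := sqrt_wdeg_ne hdeg u
      rw [hfdef]
      simp only
      rw [mul_div_assoc']
      rw [div_eq_iff hne]
      rw [mul_assoc, Real.mul_self_sqrt (hdeg u).le]
      ring
    rw [Finset.sum_congr rfl fun u _ => hpt u]
    simpa [dotProduct, hsqdef] using hworth
  obtain ⟨c, hc1, hc2⟩ := exists_median hdeg hi0lt f
  set gp : Fin n → ℝ := fun u => max (f u - c) 0 with hgpdef
  set gm : Fin n → ℝ := fun u => max (c - f u) 0 with hgmdef
  have hgmneg : ∀ u, gm u = max (-(f u - c)) 0 := by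
    intro u
    rw [hgmdef]
    simp only
    rw [show c - f u = -(f u - c) by ring]
  have hnum : (∑ u, ∑ w, A u w * (gp u - gp w) ^ 2)
      + (∑ u, ∑ w, A u w * (gm u - gm w) ^ 2) ≤ 2 * μ i1 := by
    rw [← hQ1, ← Finset.sum_add_distrib]
    refine Finset.sum_le_sum fun u _ => ?_
    rw [← Finset.sum_add_distrib]
    refine Finset.sum_le_sum fun w _ => ?_
    rw [← mul_add]
    refine mul_le_mul_of_nonneg_left ?_ (hnn u w)
    have := parts_sq (f u - c) (f w - c)
    rw [← hgmneg u, ← hgmneg w] at this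
    calc (gp u - gp w) ^ 2 + (gm u - gm w) ^ 2 ≤ (f u - c - (f w - c)) ^ 2 := this
    _ = (f u - f w) ^ 2 := by ring
  have hden : (∑ u, wdeg A u * gp u ^ 2) + (∑ u, wdeg A u * gm u ^ 2)
      = 1 + c ^ 2 * volW A Finset.univ := by
    rw [← Finset.sum_add_distrib]
    have hpt : ∀ u, wdeg A u * gp u ^ 2 + wdeg A u * gm u ^ 2
        = wdeg A u * (f u - c) ^ 2 := by
      intro u
      rw [hgmneg u, ← mul_add, hgpdef]
      simp only
      rw [max_sq_add]
    rw [Finset.sum_congr rfl fun u _ => hpt u]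
    have hexp : ∀ u, wdeg A u * (f u - c) ^ 2
        = wdeg A u * f u ^ 2 - 2 * c * (wdeg A u * f u) + c ^ 2 * wdeg A u := by
      intro u; ring
    rw [Finset.sum_congr rfl fun u _ => hexp u, Finset.sum_add_distrib,
      Finset.sum_sub_distrib]
    rw [hD1, show (∑ u, 2 * c * (wdeg A u * f u)) = 2 * c * ∑ u, wdeg A u * f u from
      (Finset.mul_sum _ _ _).symm, hsum0,
      show (∑ u, c ^ 2 * wdeg A u) = c ^ 2 * volW A Finset.univ from
      (Finset.mul_sum _ _ _).symm]
    ring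
  have hNp0 : 0 ≤ ∑ u, ∑ w, A u w * (gp u - gp w) ^ 2 :=
    Finset.sum_nonneg fun u _ => Finset.sum_nonneg fun w _ =>
      mul_nonneg (hnn u w) (sq_nonneg _)
  have hNm0 : 0 ≤ ∑ u, ∑ w, A u w * (gm u - gm w) ^ 2 :=
    Finset.sum_nonneg fun u _ => Finset.sum_nonneg fun w _ =>
      mul_nonneg (hnn u w) (sq_nonneg _)
  have hDp0 : 0 ≤ ∑ u, wdeg A u * gp u ^ 2 :=
    Finset.sum_nonneg fun u _ => mul_nonneg (hdeg u).le (sq_nonneg _)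
  have hDm0 : 0 ≤ ∑ u, wdeg A u * gm u ^ 2 :=
    Finset.sum_nonneg fun u _ => mul_nonneg (hdeg u).le (sq_nonneg _)
  have hsum1 : 1 ≤ (∑ u, wdeg A u * gp u ^ 2) + (∑ u, wdeg A u * gm u ^ 2) := by
    rw [hden]
    nlinarith [sq_nonneg c, hvol_pos]
  have hkey : ∃ g : Fin n → ℝ, (∀ u, 0 ≤ g u) ∧ 0 < (∑ u, wdeg A u * g u ^ 2) ∧
      (∑ u, ∑ w, A u w * (g u - g w) ^ 2) ≤ (2 * μ i1) * (∑ u, wdeg A u * g u ^ 2) ∧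
      volW A (Finset.univ.filter fun u => g u ≠ 0) ≤ volW A Finset.univ / 2 := by
    have hsupp_p : (Finset.univ.filter fun u => gp u ≠ 0)
        = Finset.univ.filter fun u => c < f u := by
      refine Finset.filter_congr fun u _ => ?_
      rw [hgpdef]
      simp only
      constructor
      · intro h
        by_contra hcon
        exact h (max_eq_right (by linarith [not_lt.mp hcon]))
      · intro h
        rw [max_eq_left (by linarith)]
        intro h2
        linarith
    have hsupp_m : (Finset.univ.filter fun u => gm u ≠ 0)
        = Finset.univ.filter fun u => f u < c := by
      refine Finset.filter_congr fun u _ => ?_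
      rw [hgmdef]
      simp only
      constructor
      · intro h
        by_contra hcon
        exact h (max_eq_right (by linarith [not_lt.mp hcon]))
      · intro h
        rw [max_eq_left (by linarith)]
        intro h2
        linarith
    have hgp_nn : ∀ u, 0 ≤ gp u := fun u => le_max_right _ _
    have hgm_nn : ∀ u, 0 ≤ gm u := fun u => le_max_right _ _
    by_cases hcase : (∑ u, ∑ w, A u w * (gp u - gp w) ^ 2)
        ≤ (2 * μ i1) * (∑ u, wdeg A u * gp u ^ 2) ∧ 0 < ∑ u, wdeg A u * gp u ^ 2
    · exact ⟨gp, hgp_nn, hcase.2, hcase.1, by rw [hsupp_p]; exact hc1⟩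
    · refine ⟨gm, hgm_nn, ?_, ?_, by rw [hsupp_m]; exact hc2⟩
      all_goals {
        rw [not_and_or] at hcase
        rcases hcase with hcase | hcase
        · -- Np > 2μ1 Dp
          push_neg at hcase
          have hmix : (2 * μ i1) * ((∑ u, wdeg A u * gp u ^ 2)
              + (∑ u, wdeg A u * gm u ^ 2)) ≥ 2 * μ i1 := by
            nlinarith [hsum1, hμ1]
          have hNm : (∑ u, ∑ w, A u w * (gm u - gm w) ^ 2)
              < (2 * μ i1) * (∑ u, wdeg A u * gm u ^ 2) := by nlinarith [hnum]
          have hDm : 0 < ∑ u, wdeg A u * gm u ^ 2 := by nlinarith [hNm0]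
          first
          | exact hDm
          | exact hNm.le
        · -- Dp = 0, so gp ≡ 0, Np = 0
          push_neg at hcase
          have hDp : (∑ u, wdeg A u * gp u ^ 2) = 0 := le_antisymm hcase hDp0
          have hgpz : ∀ u, gp u = 0 := by
            intro u
            have := (Finset.sum_eq_zero_iff_of_nonneg (fun u _ =>
              mul_nonneg (hdeg u).le (sq_nonneg _))).mp hDp u (Finset.mem_univ u)
            rcases mul_eq_zero.mp this with h | h
            · exact absurd h (hdeg u).ne'
            · exact pow_eq_zero_iff (by norm_num) |>.mp h
          have hNp : (∑ u, ∑ w, A u w * (gp u - gp w) ^ 2) = 0 :=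
            Finset.sum_eq_zero fun u _ => Finset.sum_eq_zero fun w _ => by
              rw [hgpz u, hgpz w]; ring
          have hDm : 0 < ∑ u, wdeg A u * gm u ^ 2 := by
            rw [hDp] at hsum1
            linarith
          have hNm : (∑ u, ∑ w, A u w * (gm u - gm w) ^ 2)
              ≤ (2 * μ i1) * (∑ u, wdeg A u * gm u ^ 2) := by
            have h1 : (∑ u, ∑ w, A u w * (gm u - gm w) ^ 2) ≤ 2 * μ i1 := by
              rw [hNp] at hnum
              linarith
            have h2 : 1 ≤ ∑ u, wdeg A u * gm u ^ 2 := by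
              rw [hDp] at hsum1
              linarith
            nlinarith [hμ1]
          first
          | exact hDm
          | exact hNm
      }
  obtain ⟨g, hg_nn, hgD, hgQ, hghalf⟩ := hkey
  -- ======================== SWEEP ========================
  set K := Real.sqrt (2 * μ i1) with hKdef
  have hK0 : 0 ≤ K := Real.sqrt_nonneg _
  have hK2 : K ^ 2 = 2 * μ i1 := Real.sq_sqrt (by linarith)
  have hcross := crossing_le hsym hnn g hg_nn hK0 (by rw [hK2]; exact hgQ)
  obtain ⟨S, hSne, hSsupp, hScut⟩ := exists_sweep_cut hnn hdeg g hg_nn hgD hK0 hcross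
  have hSsub : S ⊆ Finset.univ.filter fun u => g u ≠ 0 := fun u hu =>
    Finset.mem_filter.mpr ⟨Finset.mem_univ u, hSsupp u hu⟩
  have hvS : volW A S ≤ volW A Finset.univ / 2 :=
    (volW_mono hdeg hSsub).trans hghalf
  have hSne_univ : S ≠ Finset.univ := by
    intro h
    rw [h] at hvS
    linarith
  have hvolSc : volW A Finset.univ / 2 ≤ volW A Sᶜ := by
    have := volW_add_compl (A := A) S
    linarith
  have hmin : min (volW A S) (volW A Sᶜ) = volW A S :=
    min_eq_left (le_trans hvS hvolSc)
  have hφ : cutW A S / min (volW A S) (volW A Sᶜ) ≤ K := by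
    rw [hmin, div_le_iff₀ (volW_pos hdeg hSne)]
    linarith [hScut]
  have hbdd : BddBelow {r | ∃ S : Finset (Fin n), S.Nonempty ∧ S ≠ Finset.univ ∧
      r = cutW A S / min (volW A S) (volW A Sᶜ)} := by
    refine ⟨0, ?_⟩
    rintro r ⟨S', h1, h2, rfl⟩
    exact div_nonneg (cutW_nonneg hnn S') (le_min (volW_nonneg hdeg _) (volW_nonneg hdeg _))
  have hhigh : conductance A ≤ K :=
    (csInf_le hbdd ⟨S, hSne, hSne_univ, rfl⟩).trans hφ
  exact ⟨hlow, hhigh⟩
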